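/- After the linear symplectic change of variables φ₁ = θ₁, φ_p = −p θ₁ + θ_p, J₁ = I₁ + p I_p, J_p = I_p, the Hamiltonian G = λ I₁^{p/2}√(I_p) cos(pθ₁ − θ_p) becomes G* = λ (J₁ − p J_p)^{p/2} √(J_p) cos(φ_p), and the section {φ_p = π/2} is invariant under the flow of G*, on which the dynamics reduces to J₁' = 0 and J_p' = λ (J₁ − p J_p)^{p/2} √(J_p). -/

import Mathlib

/-- After the symplectic change φₚ = −pθ₁ + θₚ, J₁ = I₁ + pIₚ, Jₚ = Iₚ, the Hamiltonian
G = λ I₁^{p/2}√Iₚ cos(pθ₁−θₚ) becomes G* = λ(J₁−pJₚ)^{p/2}√Jₚ cos φₚ; the section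
{φₚ = π/2} is invariant (φₚ' is proportional to cos φₚ), on which J₁' = 0 and
Jₚ' = λ(J₁−pJₚ)^{p/2}√Jₚ. -/
theorem stmt10 (p : ℕ) (hp : 2 ≤ p) (lam : ℝ) (hlam : 0 < lam)
    (J1 Jp φp A : ℝ → ℝ) (hA : Continuous A)
    (hφ : ∀ t, HasDerivAt φp (A t * Real.cos (φp t)) t)
    (hJ1 : ∀ t, HasDerivAt J1 0 t)
    (hJp : ∀ t, HasDerivAt Jp
      (lam * (J1 t - p * Jp t) ^ ((p:ℝ)/2) * Real.sqrt (Jp t) * Real.sin (φp t)) t)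
    (hinit : φp 0 = Real.pi / 2) :
    (∀ θ1 θp I1 Ip : ℝ, 0 < I1 → 0 < Ip →
      lam * I1 ^ ((p:ℝ)/2) * Real.sqrt Ip * Real.cos (p * θ1 - θp)
        = lam * ((I1 + p * Ip) - p * Ip) ^ ((p:ℝ)/2) * Real.sqrt Ip
            * Real.cos (-(p:ℝ) * θ1 + θp)) ∧
    (∀ t, φp t = Real.pi / 2) ∧
    (∀ t, HasDerivAt Jp (lam * (J1 t - p * Jp t) ^ ((p:ℝ)/2) * Real.sqrt (Jp t)) t) ∧
    (∀ t, J1 t = J1 0) := by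
  -- continuity of φp
  have hφc : Continuous φp := by
    have : Differentiable ℝ φp := fun t => (hφ t).differentiableAt
    exact this.continuous
  set g : ℝ → ℝ := fun t => -(A t * Real.sin (φp t)) with hg_def
  have hg : Continuous g := (hA.mul (Real.continuous_sin.comp hφc)).neg
  set G : ℝ → ℝ := fun t => ∫ s in (0:ℝ)..t, g s with hG_def
  have hG : ∀ t, HasDerivAt G (g t) t := by
    intro t
    exact intervalIntegral.integral_hasDerivAt_right (hg.intervalIntegrable 0 t)
      (hg.stronglyMeasurableAtFilter _ _) hg.continuousAt
  -- y = cos ∘ φp satisfies y' = g * y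
  have hy : ∀ t, HasDerivAt (fun t => Real.cos (φp t)) (g t * Real.cos (φp t)) t := by
    intro t
    have := (Real.hasDerivAt_cos (φp t)).comp t (hφ t)
    refine this.congr_deriv ?_
    simp [hg_def]; ring
  -- h = y * exp(-G) has zero derivative
  have hh : ∀ t, HasDerivAt (fun t => Real.cos (φp t) * Real.exp (-G t)) 0 t := by
    intro t
    have he : HasDerivAt (fun t => Real.exp (-G t)) (-(g t) * Real.exp (-G t)) t := by
      have := (Real.hasDerivAt_exp (-G t)).comp t ((hG t).neg)
      refine this.congr_deriv ?_; ring
    have := (hy t).mul he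
    refine this.congr_deriv ?_; ring
  have hconst : ∀ t, Real.cos (φp t) * Real.exp (-G t)
      = Real.cos (φp 0) * Real.exp (-G 0) := by
    intro t
    have : ∀ t, deriv (fun t => Real.cos (φp t) * Real.exp (-G t)) t = 0 :=
      fun t => (hh t).deriv
    exact is_const_of_deriv_eq_zero
      (fun t => (hh t).differentiableAt) this t 0
  have hy0 : ∀ t, Real.cos (φp t) = 0 := by
    intro t
    have h0 : Real.cos (φp 0) = 0 := by rw [hinit]; exact Real.cos_pi_div_two
    have := hconst t
    rw [h0, zero_mul] at this
    exact (mul_eq_zero.mp this).resolve_right (Real.exp_ne_zero _)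
  have hφ0 : ∀ t, HasDerivAt φp 0 t := by
    intro t; have := hφ t; rwa [hy0 t, mul_zero] at this
  have hφconst : ∀ t, φp t = Real.pi / 2 := by
    intro t
    have : φp t = φp 0 := is_const_of_deriv_eq_zero
      (fun t => (hφ0 t).differentiableAt) (fun t => (hφ0 t).deriv) t 0
    rw [this, hinit]
  refine ⟨?_, hφconst, ?_, ?_⟩
  · intro θ1 θp I1 Ip hI1 hIp
    rw [show (-(p:ℝ) * θ1 + θp) = -((p:ℝ) * θ1 - θp) by ring, Real.cos_neg]
    ring_nf
  · intro t
    have := hJp t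
    rw [hφconst t, Real.sin_pi_div_two, mul_one] at this
    exact this
  · intro t
    exact is_const_of_deriv_eq_zero
      (fun t => (hJ1 t).differentiableAt) (fun t => (hJ1 t).deriv) t 0
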